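/- Let μ, L > 0, n ≥ 1, σ ∈ (0,1), c ≥ 0 (playing the role of ‖I − W‖²), η ∈ (0, 1/2), and suppose α ≤ nμ(1 − σ²)/(4(μ + 2nL)²(1 + c)). Define a₁ = (1−η)/2 + (μ/(2n))α, a₂ = (1−η)/2 − (L + 2nL²/μ)α, b₁ = (1 + ηc)/2, b₂ = ((1−η)σ² + η(1 + c))/2. Then a₁/b₁ ≤ a₂/b₂. -/
import Mathlib
set_option maxHeartbeats 800000


/-- with the coefficients of Proposition 1
(`a₁ = (1-η)/2 + (μ/(2n))α`, `a₂ = (1-η)/2 - (L + 2nL²/μ)α`,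
`b₁ = (1 + ηc)/2`, `b₂ = ((1-η)σ² + η(1+c))/2`, where `c` stands for
`‖I - W‖²`), if `α ≤ nμ(1-σ²)/(4(μ+2nL)²(1+c))` then `a₁/b₁ ≤ a₂/b₂`. -/
theorem stmt_15 (μ L : ℝ) (hμ : 0 < μ) (hL : 0 < L) (n : ℕ) (hn : 1 ≤ n)
    (σ : ℝ) (hσ : σ ∈ Set.Ioo (0 : ℝ) 1) (c : ℝ) (hc : 0 ≤ c)
    (η : ℝ) (hη : η ∈ Set.Ioo (0 : ℝ) (1 / 2)) (α : ℝ) (hα : 0 < α)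
    (hαbound : α ≤ n * μ * (1 - σ ^ 2) / (4 * (μ + 2 * n * L) ^ 2 * (1 + c)))
    (a₁ a₂ b₁ b₂ : ℝ)
    (ha₁ : a₁ = (1 - η) / 2 + (μ / (2 * n)) * α)
    (ha₂ : a₂ = (1 - η) / 2 - (L + 2 * n * L ^ 2 / μ) * α)
    (hb₁ : b₁ = (1 + η * c) / 2)
    (hb₂ : b₂ = ((1 - η) * σ ^ 2 + η * (1 + c)) / 2)
    (ha₂pos : 0 < a₂) (hb₂pos : 0 < b₂) :
    a₁ / b₁ ≤ a₂ / b₂ := by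
  obtain ⟨hσ0, hσ1⟩ := hσ
  obtain ⟨hη0, hη1⟩ := hη
  have hn' : (1:ℝ) ≤ (n:ℝ) := by exact_mod_cast hn
  have hnpos : (0:ℝ) < (n:ℝ) := by linarith
  have hnμ : (0:ℝ) < (n:ℝ) * μ := mul_pos hnpos hμ
  have hσsq : σ ^ 2 ≤ 1 := by nlinarith
  have hb₁pos : 0 < b₁ := by rw [hb₁]; nlinarith
  rw [div_le_div_iff₀ hb₁pos hb₂pos]
  set A : ℝ := μ / (2 * n) with hA
  set B : ℝ := L + 2 * n * L ^ 2 / μ with hB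
  set S : ℝ := (1 - η) * σ ^ 2 + η * (1 + c) with hS
  set T : ℝ := 1 + η * c with hT
  clear_value A B S T
  have hApos : 0 < A := by rw [hA]; positivity
  have hBpos : 0 < B := by rw [hB]; positivity
  have hST : S ≤ T := by rw [hS, hT]; nlinarith
  have hT1c : T ≤ 1 + c := by rw [hT]; nlinarith
  have hdenpos : (0:ℝ) < 4 * (μ + 2 * n * L) ^ 2 * (1 + c) := by positivity
  have key : α * (4 * (μ + 2 * n * L) ^ 2 * (1 + c)) ≤ n * μ * (1 - σ ^ 2) :=
    (le_div_iff₀ hdenpos).mp hαbound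
  -- (A + B) * 2nμ  =  (μ+2nL)² - 2nLμ  ≤  (μ+2nL)²
  have hABeq : (A + B) * (2 * n * μ) = μ ^ 2 + 2 * n * L * μ + 4 * n ^ 2 * L ^ 2 := by
    rw [hA, hB]; field_simp; ring
  have hAB : (A + B) * (2 * n * μ) ≤ (μ + 2 * n * L) ^ 2 := by
    have h2nLμ : (0:ℝ) ≤ 2 * n * L * μ := by positivity
    have hexp : (μ + 2 * n * L) ^ 2 = μ ^ 2 + 4 * n * L * μ + 4 * n ^ 2 * L ^ 2 := by ring
    linarith [hABeq]
  -- chain: α(AS+BT) ≤ α(A+B)(1+c), and (α(A+B)(1+c))·(8nμ) ≤ nμ(1-σ²)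
  have h1 : α * (A * S + B * T) ≤ α * ((A + B) * (1 + c)) := by
    have hA1 := mul_le_mul_of_nonneg_left (hST.trans hT1c) hApos.le
    have hB1 := mul_le_mul_of_nonneg_left hT1c hBpos.le
    have : A * S + B * T ≤ (A + B) * (1 + c) := by linarith
    exact mul_le_mul_of_nonneg_left this hα.le
  have h2 : α * ((A + B) * (1 + c)) * (8 * n * μ) ≤ n * μ * (1 - σ ^ 2) := by
    have h1c : (0:ℝ) < 1 + c := by linarith
    have := mul_le_mul_of_nonneg_left hAB (mul_nonneg hα.le h1c.le)
    linarith [key]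
  have hfinal : α * (A * S + B * T) * ((n:ℝ) * μ) * 8 ≤ (1 - σ ^ 2) * ((n:ℝ) * μ) := by
    have := mul_le_mul_of_nonneg_right h1 (by positivity : (0:ℝ) ≤ 8 * n * μ)
    linarith [h2]
  have h8 : α * (A * S + B * T) * 8 ≤ 1 - σ ^ 2 :=
    le_of_mul_le_mul_right (by linarith [hfinal]) hnμ
  have hsq : (0:ℝ) ≤ (1 - σ ^ 2) * ((1 - η) ^ 2 - 1 / 4) := by
    have h1 : (0:ℝ) ≤ 1 - σ ^ 2 := by linarith
    have h2 : (0:ℝ) ≤ (1 - η) ^ 2 - 1 / 4 := by nlinarith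
    exact mul_nonneg h1 h2
  have hdiff' : (1 - η) * (S - T) = -((1 - η) ^ 2 * (1 - σ ^ 2)) := by
    rw [hS, hT]; ring
  rw [ha₁, ha₂, hb₁, hb₂]
  linarith [h8, hsq, hdiff']
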